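/- If a q-linearized polynomial f of q-degree k over F_{q^n} has kernel of F_q-dimension exactly k in F_{q^n}, then there exists a nonzero z ∈ F_{q^n} with f_0 z = (-1)^k f_k^q z^q. -/

import Mathlib

open Polynomial Finset

-- product of all nonzero elements of a finite field is -1
lemma my_prod_erase_zero (F : Type*) [Field F] [Fintype F] [DecidableEq F] :
    ∏ c ∈ Finset.univ.erase (0 : F), c = -1 := by
  have h : ∏ x : Fˣ, (x : F) = -1 := by
    have := congrArg (Units.coeHom F) (FiniteField.prod_univ_units_id_eq_neg_one (K := F))
    simpa using this
  rw [← h]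
  symm
  apply Finset.prod_bij (fun (x : Fˣ) _ => (x : F))
  · intro a _; exact Finset.mem_erase.2 ⟨a.ne_zero, Finset.mem_univ _⟩
  · intro a _ b _ h; exact Units.ext h
  · intro c hc
    exact ⟨Units.mk0 c (Finset.mem_erase.1 hc).1, Finset.mem_univ _, rfl⟩
  · intro a _; rfl

-- orbit product lemma
lemma my_key (q : ℕ) (F L : Type) [Field F] [Fintype F] [DecidableEq F] [Field L]
    [DecidableEq L] [Algebra F L] (hF : Fintype.card F = q) :
    ∀ T : Finset L, (0 : L) ∉ T →
      (∀ (c : F) (v : L), c ≠ 0 → v ∈ T → algebraMap F L c * v ∈ T) →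
      ∃ w : L, w ≠ 0 ∧ ∃ j : ℕ, T.card = j * (q - 1) ∧
        ∏ v ∈ T, v = (-1) ^ j * w ^ (q - 1) := by
  intro T
  induction T using Finset.strongInduction with
  | _ T ih =>
    intro h0 hcl
    rcases T.eq_empty_or_nonempty with rfl | ⟨v, hv⟩
    · exact ⟨1, one_ne_zero, 0, by simp, by simp⟩
    have hv0 : v ≠ 0 := fun h => h0 (h ▸ hv)
    set ι := algebraMap F L with hι
    have hιinj : Function.Injective ι := (algebraMap F L).injective
    set O : Finset L := (Finset.univ.erase (0 : F)).image (fun c => ι c * v) with hO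
    have hinj : Set.InjOn (fun c : F => ι c * v) ↑(Finset.univ.erase (0 : F)) :=
      fun a _ b _ h => hιinj (mul_right_cancel₀ hv0 h)
    have hOsub : O ⊆ T := by
      intro x hx
      rcases Finset.mem_image.1 hx with ⟨c, hc, rfl⟩
      exact hcl c v (Finset.ne_of_mem_erase hc) hv
    have hOcard : O.card = q - 1 := by
      rw [Finset.card_image_of_injOn hinj, Finset.card_erase_of_mem (Finset.mem_univ _),
        Finset.card_univ, hF]
    have hvO : v ∈ O := Finset.mem_image.2 ⟨1, by simp, by simp⟩
    have hprodO : ∏ x ∈ O, x = -(v ^ (q - 1)) := by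
      rw [hO, Finset.prod_image hinj, Finset.prod_mul_distrib, Finset.prod_const, ← map_prod,
        my_prod_erase_zero, Finset.card_erase_of_mem (Finset.mem_univ _), Finset.card_univ, hF,
        map_neg, map_one, neg_one_mul]
    -- closure of O under scaling
    have hOclosed : ∀ (c : F), c ≠ 0 → ∀ x ∈ O, ι c * x ∈ O := by
      intro c hc x hx
      rcases Finset.mem_image.1 hx with ⟨c', hc', rfl⟩
      refine Finset.mem_image.2 ⟨c * c', ?_, by rw [map_mul]; ring⟩
      exact Finset.mem_erase.2 ⟨mul_ne_zero hc (Finset.ne_of_mem_erase hc'), Finset.mem_univ _⟩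
    have hssub : T \ O ⊂ T := Finset.sdiff_ssubset hOsub ⟨v, hvO⟩
    have h0' : (0 : L) ∉ T \ O := fun h => h0 (Finset.mem_sdiff.1 h).1
    have hcl' : ∀ (c : F) (x : L), c ≠ 0 → x ∈ T \ O → ι c * x ∈ T \ O := by
      intro c x hc hx
      rcases Finset.mem_sdiff.1 hx with ⟨hxT, hxO⟩
      refine Finset.mem_sdiff.2 ⟨hcl c x hc hxT, fun hmem => hxO ?_⟩
      have := hOclosed c⁻¹ (inv_ne_zero hc) _ hmem
      rwa [← mul_assoc, ← map_mul, inv_mul_cancel₀ hc, map_one, one_mul] at this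
    obtain ⟨w', hw', j', hcard', hprod'⟩ := ih (T \ O) hssub h0' hcl'
    refine ⟨v * w', mul_ne_zero hv0 hw', j' + 1, ?_, ?_⟩
    · have h1 : (T \ O).card = T.card - O.card := Finset.card_sdiff_of_subset hOsub
      have h2 : O.card ≤ T.card := Finset.card_le_card hOsub
      have : T.card = (T \ O).card + O.card := by omega
      rw [this, hcard', hOcard, add_mul, one_mul]
    · rw [← Finset.prod_sdiff hOsub, hprod', hprodO, mul_pow, pow_succ]
      ring


/-- If a q-linearized polynomial f of q-degree k over F_{q^n} has
kernel of F_q-dimension exactly k in F_{q^n}, then there exists a nonzero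
z ∈ F_{q^n} with f_0 z = (-1)^k f_k^q z^q. -/
theorem stmt_4 (q n : ℕ) (hq : IsPrimePow q) (hn : 0 < n)
    (F L : Type) [Field F] [Fintype F] [Field L] [Fintype L] [Algebra F L]
    (hF : Fintype.card F = q) (hL : Fintype.card L = q ^ n)
    (k : ℕ) (f : Fin (k + 1) → L) (hfk : f (Fin.last k) ≠ 0)
    (V : Submodule F L)
    (hV : (V : Set L) = {a : L | ∑ i : Fin (k + 1), f i * a ^ q ^ (i : ℕ) = 0})
    (hdim : Module.finrank F V = k) :
    ∃ z : L, z ≠ 0 ∧ f 0 * z = (-1) ^ k * (f (Fin.last k)) ^ q * z ^ q := by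
  classical
  have hq2 : 2 ≤ q := hq.two_le
  -- the finset of V
  set s : Finset L := Set.toFinset (V : Set L) with hs
  have hmem : ∀ a, a ∈ s ↔ a ∈ V := by intro a; simp [hs]
  have hscard : s.card = q ^ k := by
    have h1 := Module.card_eq_pow_finrank (K := F) (V := V)
    rw [hF, hdim] at h1
    rw [hs, Set.toFinset_card]
    exact h1
  -- the polynomial
  set P : Polynomial L := ∑ i : Fin (k + 1), Polynomial.C (f i) * Polynomial.X ^ (q ^ (i : ℕ))
    with hP
  have hpowinj : Function.Injective (q ^ · : ℕ → ℕ) := Nat.pow_right_injective hq2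
  have hPcoeff_top : P.coeff (q ^ k) = f (Fin.last k) := by
    rw [hP, Polynomial.finset_sum_coeff]
    rw [Fintype.sum_eq_single (Fin.last k)]
    · simp
    · intro i hi
      have hne : (q : ℕ) ^ k ≠ q ^ (i : ℕ) := by
        intro h
        exact hi (by ext; simpa [Fin.last] using (hpowinj h).symm)
      simp [Polynomial.coeff_X_pow, if_neg hne]
  have hPcoeff_one : P.coeff 1 = f 0 := by
    rw [hP, Polynomial.finset_sum_coeff]
    rw [Fintype.sum_eq_single (0 : Fin (k + 1))]
    · simp
    · intro i hi
      have hival : (i : ℕ) ≠ 0 := by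
        intro h; exact hi (by ext; simpa using h)
      have hne : (1 : ℕ) ≠ q ^ (i : ℕ) := by
        have : q ^ 1 ≤ q ^ (i : ℕ) := Nat.pow_le_pow_right (by omega) (by omega)
        simp at this; omega
      simp [Polynomial.coeff_X_pow, if_neg hne]
  have hPne : P ≠ 0 := by
    intro h
    rw [h, Polynomial.coeff_zero] at hPcoeff_top
    exact hfk hPcoeff_top.symm
  have hdeg : P.natDegree = q ^ k := by
    apply le_antisymm
    · rw [hP]
      apply Polynomial.natDegree_sum_le_of_forall_le
      intro i _
      exact (Polynomial.natDegree_C_mul_X_pow_le _ _).trans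
        (Nat.pow_le_pow_right (by omega) (by omega))
    · exact Polynomial.le_natDegree_of_ne_zero (hPcoeff_top ▸ hfk)
  -- roots
  have hroot : ∀ a ∈ s, P.IsRoot a := by
    intro a ha
    have h1 : a ∈ (V : Set L) := (hmem a).1 ha
    rw [hV] at h1
    simp only [Set.mem_setOf_eq] at h1
    simp only [Polynomial.IsRoot, hP, Polynomial.eval_finset_sum, Polynomial.eval_mul,
      Polynomial.eval_C, Polynomial.eval_pow, Polynomial.eval_X]
    exact h1
  have hsub : s.val ≤ P.roots := by
    rw [Multiset.le_iff_subset s.nodup]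
    intro a ha
    exact (Polynomial.mem_roots hPne).2 (hroot a ha)
  have hrootseq : P.roots = s.val := by
    apply (Multiset.eq_of_le_of_card_le hsub ?_).symm
    have : Multiset.card s.val = q ^ k := hscard
    rw [this, ← hdeg]
    exact P.card_roots'
  -- splits and factorization
  have hsplit : P.Splits := by
    rw [Polynomial.splits_iff_card_roots, hrootseq, hdeg]
    exact hscard
  have hlead : P.leadingCoeff = f (Fin.last k) := by
    rw [Polynomial.leadingCoeff, hdeg, hPcoeff_top]
  have hfact : P = Polynomial.C (f (Fin.last k)) *
      (P.roots.map fun a => Polynomial.X - Polynomial.C a).prod := by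
    rw [← hlead]; exact hsplit.eq_prod_roots
  have h0s : (0 : L) ∈ s := (hmem 0).2 V.zero_mem
  set T : Finset L := s.erase 0 with hT
  have hfact2 : P = Polynomial.C (f (Fin.last k)) *
      (Polynomial.X * ∏ a ∈ T, (Polynomial.X - Polynomial.C a)) := by
    rw [hfact, hrootseq]
    congr 1
    have : (s.val.map fun a => Polynomial.X - Polynomial.C a).prod =
        ∏ a ∈ s, (Polynomial.X - Polynomial.C a) := rfl
    rw [this, ← Finset.insert_erase h0s, Finset.prod_insert (Finset.notMem_erase _ _)]
    simp [hT]
  -- extract coefficient 1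
  have hcoeff1 : f 0 = f (Fin.last k) * ∏ a ∈ T, (-a) := by
    have h1 := congrArg (fun p => Polynomial.coeff p 1) hfact2
    simp only [hPcoeff_one] at h1
    rw [h1, Polynomial.coeff_C_mul]
    congr 1
    have h2 : (Polynomial.X * ∏ a ∈ T, (Polynomial.X - Polynomial.C a)).coeff (0 + 1) =
        (∏ a ∈ T, (Polynomial.X - Polynomial.C a)).coeff 0 :=
      Polynomial.coeff_X_mul (∏ a ∈ T, (Polynomial.X - Polynomial.C a)) 0
    rw [h2, Polynomial.coeff_zero_eq_eval_zero, Polynomial.eval_prod]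
    simp
  have hTcard : T.card = q ^ k - 1 := by
    rw [hT, Finset.card_erase_of_mem h0s, hscard]
  -- T is closed under scaling
  have hTcl : ∀ (c : F) (v : L), c ≠ 0 → v ∈ T → algebraMap F L c * v ∈ T := by
    intro c v hc hvT
    rcases Finset.mem_erase.1 hvT with ⟨hv0, hvs⟩
    have hcv : algebraMap F L c * v ∈ V := by
      have := V.smul_mem c ((hmem v).1 hvs)
      rwa [Algebra.smul_def] at this
    refine Finset.mem_erase.2 ⟨?_, (hmem _).2 hcv⟩
    exact mul_ne_zero (fun h => hc ((algebraMap F L).injective (by simpa using h))) hv0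
  have hT0 : (0 : L) ∉ T := Finset.notMem_erase _ _
  obtain ⟨w, hw, j, hjcard, hjprod⟩ := my_key q F L hF T hT0 hTcl
  -- f 0 = f k * (-1)^(q^k-1) * (-1)^j * w^(q-1)
  have hprodneg : ∏ a ∈ T, (-a) = (-1 : L) ^ (q ^ k - 1) * ∏ a ∈ T, a := by
    rw [← hTcard]
    calc ∏ a ∈ T, (-a) = ∏ a ∈ T, ((-1) * a) := by simp
    _ = (∏ _a ∈ T, (-1 : L)) * ∏ a ∈ T, a := Finset.prod_mul_distrib
    _ = (-1 : L) ^ T.card * ∏ a ∈ T, a := by rw [Finset.prod_const]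
  -- identify j with the geometric sum, in ℤ
  have hjz : (j : ℤ) = ∑ i ∈ Finset.range k, (q : ℤ) ^ i := by
    have h1 : (j : ℤ) * ((q : ℤ) - 1) = (q : ℤ) ^ k - 1 := by
      have h2 : (j * (q - 1) : ℕ) = (q ^ k - 1 : ℕ) := by rw [← hjcard, hTcard]
      have h3 : (1 : ℕ) ≤ q := by omega
      have h4 : (1 : ℕ) ≤ q ^ k := Nat.one_le_pow _ _ (by omega)
      have := congrArg (fun x : ℕ => (x : ℤ)) h2
      push_cast [Nat.cast_sub h3, Nat.cast_sub h4] at this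
      simpa using this
    have h5 := geom_sum_mul (q : ℤ) k
    have h6 : ((q : ℤ) - 1) ≠ 0 := by
      have : (2 : ℤ) ≤ (q : ℤ) := by exact_mod_cast hq2
      omega
    have := h1.trans h5.symm
    exact mul_right_cancel₀ h6 this
  -- the sign identity
  have hsign : (-1 : L) ^ (q ^ k - 1) * (-1 : L) ^ j = (-1 : L) ^ k := by
    rcases Nat.even_or_odd q with hqe | hqo
    · -- q even: char L = 2, so -1 = 1
      have hneg : (-1 : L) = 1 := by
        obtain ⟨p, e, hp, he, hpe⟩ := hq
        have hp' : p.Prime := Nat.prime_iff.2 hp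
        have h2p : (2 : ℕ) ∣ p := by
          have : (2 : ℕ) ∣ p ^ e := hpe ▸ hqe.two_dvd
          exact Nat.Prime.dvd_of_dvd_pow Nat.prime_two this
        have hp2 : p = 2 := ((Nat.prime_dvd_prime_iff_eq Nat.prime_two hp').1 h2p).symm
        set r := ringChar L with hr
        haveI : CharP L r := ringChar.charP L
        obtain ⟨m, hrp, hcard⟩ := FiniteField.card L r
        have hr2 : r = 2 := by
          have hdvd : r ∣ 2 := by
            apply Nat.Prime.dvd_of_dvd_pow (n := e * n) hrp
            have : r ∣ r ^ (m : ℕ) := dvd_pow_self r m.ne_zero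
            rw [← hcard, hL, ← hpe, hp2, ← pow_mul] at this
            exact this
          exact ((Nat.prime_dvd_prime_iff_eq hrp Nat.prime_two).1 hdvd)
        have h2z : (2 : L) = 0 := by
          have := CharP.cast_eq_zero L r
          rw [hr2] at this
          exact_mod_cast this
        linear_combination -h2z
      rw [hneg]; simp
    · -- q odd
      have hqk : Odd (q ^ k) := hqo.pow
      have heven : Even (q ^ k - 1) := by
        have h1 : q ^ k % 2 = 1 := Nat.odd_iff.1 hqk
        have h2 : 1 ≤ q ^ k := Nat.one_le_pow _ _ (by omega)
        rw [Nat.even_iff]; omega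
      have hjmod : j % 2 = k % 2 := by
        have h1 : ((j : ℕ) : ZMod 2) = ((k : ℕ) : ZMod 2) := by
          have h2 := congrArg (fun x : ℤ => (x : ZMod 2)) hjz
          push_cast at h2
          rw [h2]
          have hq1 : ((q : ℕ) : ZMod 2) = 1 := by
            rw [← ZMod.natCast_mod q 2, Nat.odd_iff.1 hqo]
            norm_num
          simp [hq1]
        exact (ZMod.natCast_eq_natCast_iff' j k 2).1 h1
      rw [heven.neg_one_pow, one_mul]
      rcases Nat.even_or_odd j with hj | hj
      · have hk : Even k := by rw [Nat.even_iff] at hj ⊢; omega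
        rw [hj.neg_one_pow, hk.neg_one_pow]
      · have hk : Odd k := by rw [Nat.odd_iff] at hj ⊢; omega
        rw [hj.neg_one_pow, hk.neg_one_pow]
  -- conclude
  have hf0 : f 0 = f (Fin.last k) * ((-1 : L) ^ k * w ^ (q - 1)) := by
    rw [hcoeff1, hprodneg, hjprod, ← hsign]; ring
  refine ⟨w * (f (Fin.last k))⁻¹, mul_ne_zero hw (inv_ne_zero hfk), ?_⟩
  have hq1 : q = (q - 1) + 1 := by omega
  rw [hf0, hq1]
  set m := q - 1 with hm
  have hfkinv : f (Fin.last k) * (f (Fin.last k))⁻¹ = 1 := mul_inv_cancel₀ hfk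
  calc f (Fin.last k) * ((-1 : L) ^ k * w ^ m) * (w * (f (Fin.last k))⁻¹)
      = ((-1 : L) ^ k * w ^ (m + 1)) * (f (Fin.last k) * (f (Fin.last k))⁻¹) := by ring
    _ = (-1 : L) ^ k * w ^ (m + 1) := by rw [hfkinv, mul_one]
    _ = ((-1 : L) ^ k * (f (Fin.last k) * (f (Fin.last k))⁻¹) ^ (m + 1)) * w ^ (m + 1) := by
        rw [hfkinv, one_pow]; ring
    _ = (-1 : L) ^ k * f (Fin.last k) ^ (m + 1) * (w * (f (Fin.last k))⁻¹) ^ (m + 1) := by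
        rw [mul_pow, mul_pow]; ring
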